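/- Let A be an additive category, X a locally finite simplicial complex, and f: C → D a chain map of finite chain complexes in A*(X). Then f is a chain equivalence in A*(X) if and only if each diagonal component f_{σ,σ}: C(σ) → D(σ) is a chain equivalence in A. -/

import Mathlib

open CategoryTheory

attribute [local instance] Classical.propDecidable

/-- A finite chain complex in the simplicially graded additive category `A*(X)`. -/
structure GCx (X : Type) [PartialOrder X] [∀ ρ σ : X, Fintype {τ : X // ρ ≤ τ ∧ τ ≤ σ}]
    (A : Type) [Category A] [Preadditive A] where
  ob : ℤ → X → A
  d : ∀ (i j : ℤ) (σ τ : X), ob i σ ⟶ ob j τ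
  shape : ∀ (i j : ℤ) (σ τ : X), ¬(τ ≤ σ ∧ j = i - 1) → d i j σ τ = 0
  dsq : ∀ (i : ℤ) (σ ρ : X),
    (∑ τ : {τ : X // ρ ≤ τ ∧ τ ≤ σ}, d i (i - 1) σ τ.1 ≫ d (i - 1) (i - 1 - 1) τ.1 ρ) = 0
  bounded : ∃ N : ℕ, ∀ (i : ℤ) (σ : X), (N : ℤ) < |i| → Limits.IsZero (ob i σ)

variable {X : Type} [PartialOrder X] [∀ ρ σ : X, Fintype {τ : X // ρ ≤ τ ∧ τ ≤ σ}]
variable {A : Type} [Category A] [Preadditive A]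

/-- A chain map in `A*(X)`: components `f i σ τ : C_i(σ) ⟶ D_i(τ)` supported on
`τ ≤ σ`, commuting with the differentials componentwise. -/
structure HomGC (C D : GCx X A) where
  f : ∀ (i : ℤ) (σ τ : X), C.ob i σ ⟶ D.ob i τ
  shape : ∀ (i : ℤ) (σ τ : X), ¬τ ≤ σ → f i σ τ = 0
  comm : ∀ (i : ℤ) (σ ρ : X),
    (∑ τ : {τ : X // ρ ≤ τ ∧ τ ≤ σ}, C.d i (i - 1) σ τ.1 ≫ f (i - 1) τ.1 ρ) =
    (∑ τ : {τ : X // ρ ≤ τ ∧ τ ≤ σ}, f i σ τ.1 ≫ D.d i (i - 1) τ.1 ρ)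

/-- `f` is a chain equivalence in `A*(X)`: there is a chain homotopy inverse `g` in
`A*(X)`, with chain homotopies (supported on `τ ≤ σ`, of degree `+1`)
`dP + Pd = id − g∘f` and `dQ + Qd = id − f∘g`, all componentwise. -/
def IsEquivGC (C D : GCx X A) (f : HomGC C D) : Prop :=
  ∃ g : HomGC D C,
    (∃ P : ∀ (i j : ℤ) (σ τ : X), C.ob i σ ⟶ C.ob j τ,
      (∀ (i j : ℤ) (σ τ : X), ¬(τ ≤ σ ∧ j = i + 1) → P i j σ τ = 0) ∧
      ∀ (i : ℤ) (σ ρ : X),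
        (∑ τ : {τ : X // ρ ≤ τ ∧ τ ≤ σ}, C.d i (i - 1) σ τ.1 ≫ P (i - 1) i τ.1 ρ)
          + (∑ τ : {τ : X // ρ ≤ τ ∧ τ ≤ σ}, P i (i + 1) σ τ.1 ≫ C.d (i + 1) i τ.1 ρ)
        = (if h : ρ = σ then eqToHom (by rw [h]) else 0)
          - (∑ τ : {τ : X // ρ ≤ τ ∧ τ ≤ σ}, f.f i σ τ.1 ≫ g.f i τ.1 ρ)) ∧
    (∃ Q : ∀ (i j : ℤ) (σ τ : X), D.ob i σ ⟶ D.ob j τ,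
      (∀ (i j : ℤ) (σ τ : X), ¬(τ ≤ σ ∧ j = i + 1) → Q i j σ τ = 0) ∧
      ∀ (i : ℤ) (σ ρ : X),
        (∑ τ : {τ : X // ρ ≤ τ ∧ τ ≤ σ}, D.d i (i - 1) σ τ.1 ≫ Q (i - 1) i τ.1 ρ)
          + (∑ τ : {τ : X // ρ ≤ τ ∧ τ ≤ σ}, Q i (i + 1) σ τ.1 ≫ D.d (i + 1) i τ.1 ρ)
        = (if h : ρ = σ then eqToHom (by rw [h]) else 0)
          - (∑ τ : {τ : X // ρ ≤ τ ∧ τ ≤ σ}, g.f i σ τ.1 ≫ f.f i τ.1 ρ))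

/-- The diagonal component `f_{σ,σ} : C(σ) → D(σ)` is a chain equivalence in `A`. -/
def IsLocalEquiv (C D : GCx X A) (f : HomGC C D) (σ : X) : Prop :=
  ∃ g : ∀ i : ℤ, D.ob i σ ⟶ C.ob i σ,
    (∀ i : ℤ, D.d i (i - 1) σ σ ≫ g (i - 1) = g i ≫ C.d i (i - 1) σ σ) ∧
    (∃ P : ∀ i j : ℤ, C.ob i σ ⟶ C.ob j σ,
      ∀ i : ℤ, C.d i (i - 1) σ σ ≫ P (i - 1) i + P i (i + 1) ≫ C.d (i + 1) i σ σ
        = 𝟙 (C.ob i σ) - f.f i σ σ ≫ g i) ∧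
    (∃ Q : ∀ i j : ℤ, D.ob i σ ⟶ D.ob j σ,
      ∀ i : ℤ, D.d i (i - 1) σ σ ≫ Q (i - 1) i + Q i (i + 1) ≫ D.d (i + 1) i σ σ
        = 𝟙 (D.ob i σ) - g i ≫ f.f i σ σ)


section Helpers
variable {X : Type} [PartialOrder X] [∀ ρ σ : X, Fintype {τ : X // ρ ≤ τ ∧ τ ≤ σ}]

abbrev Iv (ρ σ : X) := {τ : X // ρ ≤ τ ∧ τ ≤ σ}

omit [∀ ρ σ : X, Fintype {τ : X // ρ ≤ τ ∧ τ ≤ σ}] in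
lemma Iv.isEmpty {ρ σ : X} (h : ¬ρ ≤ σ) : IsEmpty (Iv ρ σ) :=
  ⟨fun τ => h (τ.2.1.trans τ.2.2)⟩

lemma sum_empty_interval {M : Type*} [AddCommMonoid M] {ρ σ : X} (h : ¬ρ ≤ σ)
    (F : Iv ρ σ → M) : ∑ τ : Iv ρ σ, F τ = 0 := by
  haveI := Iv.isEmpty h
  rw [Finset.univ_eq_empty, Finset.sum_empty]

lemma sum_self {M : Type*} [AddCommMonoid M] (σ : X) (F : Iv σ σ → M) :
    ∑ τ : Iv σ σ, F τ = F ⟨σ, le_refl σ, le_refl σ⟩ := by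
  haveI u : Unique (Iv σ σ) :=
    ⟨⟨⟨σ, le_refl σ, le_refl σ⟩⟩, fun τ => Subtype.ext (le_antisymm τ.2.2 τ.2.1)⟩
  rw [Fintype.sum_unique F]
  exact (congrArg F (u.uniq _)).symm

def chainEquiv (ρ σ : X) : (Σ τ : Iv ρ σ, Iv τ.1 σ) ≃ (Σ π : Iv ρ σ, Iv ρ π.1) where
  toFun p := ⟨⟨p.2.1, p.1.2.1.trans p.2.2.1, p.2.2.2⟩, ⟨p.1.1, p.1.2.1, p.2.2.1⟩⟩
  invFun p := ⟨⟨p.2.1, p.2.2.1, p.2.2.2.trans p.1.2.2⟩, ⟨p.1.1, p.2.2.2, p.1.2.2⟩⟩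
  left_inv p := rfl
  right_inv p := rfl

lemma interval_fubini {M : Type*} [AddCommMonoid M] (ρ σ : X) (f : X → X → M) :
    ∑ τ : Iv ρ σ, ∑ π : Iv τ.1 σ, f τ.1 π.1
      = ∑ π : Iv ρ σ, ∑ τ : Iv ρ π.1, f τ.1 π.1 := by
  rw [Finset.sum_sigma' Finset.univ (fun _ => Finset.univ),
      Finset.sum_sigma' Finset.univ (fun _ => Finset.univ),
      Finset.univ_sigma_univ, Finset.univ_sigma_univ]
  exact Fintype.sum_equiv (chainEquiv ρ σ) _ _ (fun p => rfl)

lemma card_Iv_le {ρ τ σ : X} (h : τ ≤ σ) :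
    Fintype.card (Iv ρ τ) ≤ Fintype.card (Iv ρ σ) :=
  Fintype.card_le_of_injective (fun x => ⟨x.1, x.2.1, x.2.2.trans h⟩)
    (fun x y hxy => Subtype.ext (by simpa using congrArg Subtype.val hxy))

lemma card_Iv_lt {ρ π σ : X} (hπ : ρ ≤ π) (hπσ : π ≤ σ) (hne : π ≠ σ) :
    Fintype.card (Iv ρ π) < Fintype.card (Iv ρ σ) := by
  refine Fintype.card_lt_of_injective_of_notMem
    (fun x => ⟨x.1, x.2.1, x.2.2.trans hπσ⟩)
    (fun x y hxy => Subtype.ext (by simpa using congrArg Subtype.val hxy))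
    (b := ⟨σ, hπ.trans hπσ, le_refl σ⟩) ?_
  rintro ⟨x, hx⟩
  have hx1 : x.1 = σ := congrArg Subtype.val hx
  exact hne (le_antisymm hπσ (hx1 ▸ x.2.2))

lemma card_Iv_le' {ρ τ σ : X} (h : ρ ≤ τ) :
    Fintype.card (Iv τ σ) ≤ Fintype.card (Iv ρ σ) :=
  Fintype.card_le_of_injective (fun x => ⟨x.1, h.trans x.2.1, x.2.2⟩)
    (fun x y hxy => Subtype.ext (by simpa using congrArg Subtype.val hxy))

end Helpers

section PCcat

variable (B : Type) [Category B] [Preadditive B]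

structure PC where
  fst : B
  snd : B

variable {B}

@[ext] structure PHom (M N : PC B) where
  a : M.fst ⟶ N.fst
  b : M.fst ⟶ N.snd
  c : M.snd ⟶ N.fst
  e : M.snd ⟶ N.snd

instance : Category (PC B) where
  Hom := PHom
  id M := ⟨𝟙 _, 0, 0, 𝟙 _⟩
  comp u v := ⟨u.a ≫ v.a + u.b ≫ v.c, u.a ≫ v.b + u.b ≫ v.e,
               u.c ≫ v.a + u.e ≫ v.c, u.c ≫ v.b + u.e ≫ v.e⟩
  id_comp := by intros; refine PHom.ext ?_ ?_ ?_ ?_ <;> simp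
  comp_id := by intros; refine PHom.ext ?_ ?_ ?_ ?_ <;> simp
  assoc := by
    intros
    refine PHom.ext ?_ ?_ ?_ ?_ <;>
      simp [Preadditive.add_comp, Preadditive.comp_add, Category.assoc] <;> abel

namespace PHom

variable {M N K : PC B}

@[ext] lemma hom_ext {u v : M ⟶ N} (ha : PHom.a u = PHom.a v) (hb : PHom.b u = PHom.b v)
    (hc : PHom.c u = PHom.c v) (he : PHom.e u = PHom.e v) : u = v :=
  PHom.ext ha hb hc he

@[simp] lemma id_a : (𝟙 M : M ⟶ M).a = 𝟙 M.fst := rfl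
@[simp] lemma id_b : (𝟙 M : M ⟶ M).b = 0 := rfl
@[simp] lemma id_c : (𝟙 M : M ⟶ M).c = 0 := rfl
@[simp] lemma id_e : (𝟙 M : M ⟶ M).e = 𝟙 M.snd := rfl

@[simp] lemma comp_a (u : M ⟶ N) (v : N ⟶ K) : (u ≫ v).a = u.a ≫ v.a + u.b ≫ v.c := rfl
@[simp] lemma comp_b (u : M ⟶ N) (v : N ⟶ K) : (u ≫ v).b = u.a ≫ v.b + u.b ≫ v.e := rfl
@[simp] lemma comp_c (u : M ⟶ N) (v : N ⟶ K) : (u ≫ v).c = u.c ≫ v.a + u.e ≫ v.c := rfl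
@[simp] lemma comp_e (u : M ⟶ N) (v : N ⟶ K) : (u ≫ v).e = u.c ≫ v.b + u.e ≫ v.e := rfl

instance : Zero (M ⟶ N) := ⟨⟨0, 0, 0, 0⟩⟩
instance : Add (M ⟶ N) := ⟨fun u v => ⟨u.a + v.a, u.b + v.b, u.c + v.c, u.e + v.e⟩⟩
instance : Neg (M ⟶ N) := ⟨fun u => ⟨-u.a, -u.b, -u.c, -u.e⟩⟩

instance : AddCommGroup (M ⟶ N) where
  add_assoc := by intros; refine PHom.ext ?_ ?_ ?_ ?_ <;> apply add_assoc
  zero_add := by intros; refine PHom.ext ?_ ?_ ?_ ?_ <;> apply zero_add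
  add_zero := by intros; refine PHom.ext ?_ ?_ ?_ ?_ <;> apply add_zero
  add_comm := by intros; refine PHom.ext ?_ ?_ ?_ ?_ <;> apply add_comm
  neg_add_cancel := by intros; refine PHom.ext ?_ ?_ ?_ ?_ <;> apply neg_add_cancel
  nsmul := nsmulRec
  zsmul := zsmulRec
  nsmul_zero := fun _ => rfl
  nsmul_succ := fun _ _ => rfl
  zsmul_zero' := fun _ => rfl
  zsmul_succ' := fun _ _ => rfl
  zsmul_neg' := fun _ _ => rfl

@[simp] lemma zero_a : (0 : M ⟶ N).a = 0 := rfl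
@[simp] lemma zero_b : (0 : M ⟶ N).b = 0 := rfl
@[simp] lemma zero_c : (0 : M ⟶ N).c = 0 := rfl
@[simp] lemma zero_e : (0 : M ⟶ N).e = 0 := rfl
@[simp] lemma add_a (u v : M ⟶ N) : (u + v).a = u.a + v.a := rfl
@[simp] lemma add_b (u v : M ⟶ N) : (u + v).b = u.b + v.b := rfl
@[simp] lemma add_c (u v : M ⟶ N) : (u + v).c = u.c + v.c := rfl
@[simp] lemma add_e (u v : M ⟶ N) : (u + v).e = u.e + v.e := rfl
@[simp] lemma neg_a (u : M ⟶ N) : (-u).a = -u.a := rfl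
@[simp] lemma neg_b (u : M ⟶ N) : (-u).b = -u.b := rfl
@[simp] lemma neg_c (u : M ⟶ N) : (-u).c = -u.c := rfl
@[simp] lemma neg_e (u : M ⟶ N) : (-u).e = -u.e := rfl

@[simp] lemma sub_a (u v : M ⟶ N) : (u - v).a = u.a - v.a := by
  rw [sub_eq_add_neg, sub_eq_add_neg]; rfl
@[simp] lemma sub_e (u v : M ⟶ N) : (u - v).e = u.e - v.e := by
  rw [sub_eq_add_neg, sub_eq_add_neg]; rfl

def aHom : (M ⟶ N) →+ (M.fst ⟶ N.fst) := ⟨⟨PHom.a, rfl⟩, fun _ _ => rfl⟩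
def bHom : (M ⟶ N) →+ (M.fst ⟶ N.snd) := ⟨⟨PHom.b, rfl⟩, fun _ _ => rfl⟩
def cHom : (M ⟶ N) →+ (M.snd ⟶ N.fst) := ⟨⟨PHom.c, rfl⟩, fun _ _ => rfl⟩
def eHom : (M ⟶ N) →+ (M.snd ⟶ N.snd) := ⟨⟨PHom.e, rfl⟩, fun _ _ => rfl⟩

lemma sum_a {ι : Type*} (s : Finset ι) (F : ι → (M ⟶ N)) :
    (∑ x ∈ s, F x).a = ∑ x ∈ s, (F x).a := map_sum (aHom) F s
lemma sum_b {ι : Type*} (s : Finset ι) (F : ι → (M ⟶ N)) :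
    (∑ x ∈ s, F x).b = ∑ x ∈ s, (F x).b := map_sum (bHom) F s
lemma sum_c {ι : Type*} (s : Finset ι) (F : ι → (M ⟶ N)) :
    (∑ x ∈ s, F x).c = ∑ x ∈ s, (F x).c := map_sum (cHom) F s
lemma sum_e {ι : Type*} (s : Finset ι) (F : ι → (M ⟶ N)) :
    (∑ x ∈ s, F x).e = ∑ x ∈ s, (F x).e := map_sum (eHom) F s

@[simp] lemma eqToHom_a {M N : PC B} (h : M = N) :
    (eqToHom h).a = eqToHom (congrArg PC.fst h) := by subst h; rfl
@[simp] lemma eqToHom_b {M N : PC B} (h : M = N) : (eqToHom h).b = 0 := by subst h; rfl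
@[simp] lemma eqToHom_c {M N : PC B} (h : M = N) : (eqToHom h).c = 0 := by subst h; rfl
@[simp] lemma eqToHom_e {M N : PC B} (h : M = N) :
    (eqToHom h).e = eqToHom (congrArg PC.snd h) := by subst h; rfl

end PHom

instance : Preadditive (PC B) where
  add_comp := by
    intros; refine PHom.ext ?_ ?_ ?_ ?_ <;> simp [Preadditive.add_comp] <;> abel
  comp_add := by
    intros; refine PHom.ext ?_ ?_ ?_ ?_ <;> simp [Preadditive.comp_add] <;> abel

lemma PC.isZero {M : PC B} (h1 : Limits.IsZero M.fst) (h2 : Limits.IsZero M.snd) :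
    Limits.IsZero M := by
  rw [Limits.IsZero.iff_id_eq_zero]
  refine PHom.ext ?_ ?_ ?_ ?_
  · exact h1.eq_of_src _ _
  · exact h1.eq_of_src _ _
  · exact h2.eq_of_src _ _
  · exact h2.eq_of_src _ _

end PCcat
section Contract
open CategoryTheory.Limits
variable {X : Type} [PartialOrder X] [∀ ρ σ : X, Fintype {τ : X // ρ ≤ τ ∧ τ ≤ σ}]
variable {B : Type} [Category B] [Preadditive B]

/-- Kronecker delta operator. -/
noncomputable def del (E : GCx X B) (j : ℤ) (σ τ : X) : E.ob j σ ⟶ E.ob j τ :=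
  if h : τ = σ then eqToHom (by rw [h]) else 0

@[simp] lemma del_self (E : GCx X B) (j : ℤ) (σ : X) : del E j σ σ = 𝟙 _ := by
  simp [del]

lemma del_ne (E : GCx X B) (j : ℤ) {σ τ : X} (h : τ ≠ σ) : del E j σ τ = 0 := by
  simp [del, h]

variable {E : GCx X B}

lemma sum_del_right {W : B} {ρ σ : X} (h : ρ ≤ σ) (j : ℤ) (F : ∀ τ : X, W ⟶ E.ob j τ) :
    ∑ τ : Iv ρ σ, F τ.1 ≫ del E j τ.1 ρ = F ρ := by
  rw [Finset.sum_eq_single_of_mem ⟨ρ, le_refl ρ, h⟩ (Finset.mem_univ _)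
    (fun b _ hb => by
      rw [del_ne E j (fun hh => hb (Subtype.ext hh.symm))]; simp)]
  simp [del]

lemma sum_del_left {W : B} {ρ σ : X} (h : ρ ≤ σ) (j : ℤ) (F : ∀ τ : X, E.ob j τ ⟶ W) :
    ∑ τ : Iv ρ σ, del E j σ τ.1 ≫ F τ.1 = F σ := by
  rw [Finset.sum_eq_single_of_mem ⟨σ, h, le_refl σ⟩ (Finset.mem_univ _)
    (fun b _ hb => by
      rw [del_ne E j (fun hh => hb (Subtype.ext hh))]; simp)]
  simp [del]

variable (E) (s : ∀ (σ : X) (i j : ℤ), E.ob i σ ⟶ E.ob j σ)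

/-- The defect operator `ν = 1 - (ds + sd)`. -/
noncomputable def nu (i : ℤ) (σ τ : X) : E.ob i σ ⟶ E.ob i τ :=
  del E i σ τ - E.d i (i-1) σ τ ≫ s τ (i-1) i - s σ i (i+1) ≫ E.d (i+1) i σ τ

noncomputable def nupow (k : ℕ) : ∀ (i : ℤ) (σ τ : X), E.ob i σ ⟶ E.ob i τ :=
  Nat.rec (motive := fun _ => ∀ (i : ℤ) (σ τ : X), E.ob i σ ⟶ E.ob i τ)
    (fun i σ τ => del E i σ τ)
    (fun _ prev i σ τ => ∑ π : Iv τ σ, nu E s i σ π.1 ≫ prev i π.1 τ) k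

@[simp] lemma nupow_zero (i : ℤ) (σ τ : X) : nupow E s 0 i σ τ = del E i σ τ := rfl

lemma nupow_succ (k : ℕ) (i : ℤ) (σ τ : X) :
    nupow E s (k+1) i σ τ = ∑ π : Iv τ σ, nu E s i σ π.1 ≫ nupow E s k i π.1 τ := rfl

variable {E s}
variable (hs : ∀ (σ : X) (i : ℤ),
  E.d i (i-1) σ σ ≫ s σ (i-1) i + s σ i (i+1) ≫ E.d (i+1) i σ σ = 𝟙 (E.ob i σ))

include hs in
lemma nu_self (i : ℤ) (σ : X) : nu E s i σ σ = 0 := by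
  rw [nu, del_self, sub_sub, hs σ i, sub_self]

omit hs in
lemma nu_shape {σ τ : X} (h : ¬τ ≤ σ) (i : ℤ) : nu E s i σ τ = 0 := by
  rw [nu, del_ne E i (fun e => h (le_of_eq e)),
    E.shape _ _ _ _ (fun hh => h hh.1), E.shape _ _ _ _ (fun hh => h hh.1)]
  simp

omit hs in
lemma nupow_shape (k : ℕ) {σ τ : X} (h : ¬τ ≤ σ) (i : ℤ) : nupow E s k i σ τ = 0 := by
  cases k with
  | zero => exact del_ne E i (fun e => h (le_of_eq e))
  | succ k => exact sum_empty_interval h _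

include hs in
lemma nupow_nil : ∀ (k : ℕ) (i : ℤ) (σ τ : X), Fintype.card (Iv τ σ) ≤ k →
    nupow E s k i σ τ = 0 := by
  intro k
  induction k with
  | zero =>
    intro i σ τ hc
    have hne : τ ≠ σ := by
      intro h
      have : 0 < Fintype.card (Iv τ σ) :=
        Fintype.card_pos_iff.2 ⟨⟨τ, le_refl τ, le_of_eq h⟩⟩
      omega
    exact del_ne E i hne
  | succ k ih =>
    intro i σ τ hc
    rw [nupow_succ]
    refine Finset.sum_eq_zero (fun π _ => ?_)
    by_cases hπ : π.1 = σ
    · rw [hπ, nu_self hs _ _, zero_comp]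
    · rw [ih i π.1 τ (by
        have := card_Iv_lt π.2.1 π.2.2 hπ
        omega), comp_zero]

include hs in
lemma d_nu (i : ℤ) (σ ρ : X) :
    ∑ τ : Iv ρ σ, E.d i (i-1) σ τ.1 ≫ nu E s (i-1) τ.1 ρ
      = ∑ τ : Iv ρ σ, nu E s i σ τ.1 ≫ E.d i (i-1) τ.1 ρ := by
  by_cases hρσ : ρ ≤ σ
  · have hL : ∀ τ : Iv ρ σ, E.d i (i-1) σ τ.1 ≫ nu E s (i-1) τ.1 ρ
        = E.d i (i-1) σ τ.1 ≫ del E (i-1) τ.1 ρ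
          - (E.d i (i-1) σ τ.1 ≫ E.d (i-1) (i-1-1) τ.1 ρ) ≫ s ρ (i-1-1) (i-1)
          - E.d i (i-1) σ τ.1 ≫ (s τ.1 (i-1) i ≫ E.d i (i-1) τ.1 ρ) := by
      intro τ
      rw [nu]
      rw [show i-1+1 = i from by omega]
      simp only [Preadditive.comp_sub, Category.assoc]
    have hR : ∀ τ : Iv ρ σ, nu E s i σ τ.1 ≫ E.d i (i-1) τ.1 ρ
        = del E i σ τ.1 ≫ E.d i (i-1) τ.1 ρ
          - E.d i (i-1) σ τ.1 ≫ (s τ.1 (i-1) i ≫ E.d i (i-1) τ.1 ρ)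
          - s σ i (i+1) ≫ (E.d (i+1) i σ τ.1 ≫ E.d i (i-1) τ.1 ρ) := by
      intro τ
      rw [nu]
      simp only [Preadditive.sub_comp, Category.assoc]
    rw [Finset.sum_congr rfl (fun τ _ => hL τ), Finset.sum_congr rfl (fun τ _ => hR τ)]
    rw [Finset.sum_sub_distrib, Finset.sum_sub_distrib,
        Finset.sum_sub_distrib, Finset.sum_sub_distrib]
    have h1 := sum_del_right (E := E) hρσ (i-1) (fun t => E.d i (i-1) σ t)
    have h3 := sum_del_left (E := E) hρσ i (fun t => E.d i (i-1) t ρ)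
    have h2 : ∑ τ : Iv ρ σ, (E.d i (i-1) σ τ.1 ≫ E.d (i-1) (i-1-1) τ.1 ρ) ≫ s ρ (i-1-1) (i-1)
        = 0 := by
      rw [← Preadditive.sum_comp, E.dsq i σ ρ, zero_comp]
    have h4 : ∑ τ : Iv ρ σ, s σ i (i+1) ≫ (E.d (i+1) i σ τ.1 ≫ E.d i (i-1) τ.1 ρ) = 0 := by
      have hdsq := E.dsq (i+1) σ ρ
      rw [show i+1-1 = i from by omega] at hdsq
      rw [← Preadditive.comp_sum, hdsq, comp_zero]
    rw [h1, h2, h3, h4]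
    abel
  · rw [sum_empty_interval hρσ, sum_empty_interval hρσ]

include hs in
lemma nupow_mul_right : ∀ (k : ℕ) (i : ℤ) (σ ρ : X),
    ∑ τ : Iv ρ σ, nupow E s k i σ τ.1 ≫ nu E s i τ.1 ρ = nupow E s (k+1) i σ ρ := by
  intro k
  induction k with
  | zero =>
    intro i σ ρ
    by_cases hρσ : ρ ≤ σ
    · rw [nupow_succ]
      have h1 := sum_del_left (E := E) hρσ i (fun t => nu E s i t ρ)
      have h2 := sum_del_right (E := E) hρσ i (fun t => nu E s i σ t)
      simp only [nupow_zero]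
      rw [h1, h2]
    · rw [sum_empty_interval hρσ, nupow_succ, sum_empty_interval hρσ]
  | succ k ih =>
    intro i σ ρ
    have step1 : ∀ τ : Iv ρ σ, nupow E s (k+1) i σ τ.1 ≫ nu E s i τ.1 ρ
        = ∑ π : Iv τ.1 σ, nu E s i σ π.1 ≫ (nupow E s k i π.1 τ.1 ≫ nu E s i τ.1 ρ) := by
      intro τ
      rw [nupow_succ, Preadditive.sum_comp]
      exact Finset.sum_congr rfl (fun π _ => Category.assoc _ _ _)
    rw [Finset.sum_congr rfl (fun τ _ => step1 τ)]
    rw [interval_fubini ρ σ (fun t p => nu E s i σ p ≫ (nupow E s k i p t ≫ nu E s i t ρ))]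
    have step2 : ∀ π : Iv ρ σ, (∑ τ : Iv ρ π.1,
        nu E s i σ π.1 ≫ (nupow E s k i π.1 τ.1 ≫ nu E s i τ.1 ρ))
        = nu E s i σ π.1 ≫ nupow E s (k+1) i π.1 ρ := by
      intro π
      rw [← Preadditive.comp_sum]
      congr 1
      exact ih i π.1 ρ
    rw [Finset.sum_congr rfl (fun π _ => step2 π), ← nupow_succ]

include hs in
lemma d_nupow : ∀ (k : ℕ) (i : ℤ) (σ ρ : X),
    ∑ τ : Iv ρ σ, E.d i (i-1) σ τ.1 ≫ nupow E s k (i-1) τ.1 ρ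
      = ∑ τ : Iv ρ σ, nupow E s k i σ τ.1 ≫ E.d i (i-1) τ.1 ρ := by
  intro k
  induction k with
  | zero =>
    intro i σ ρ
    by_cases hρσ : ρ ≤ σ
    · simp only [nupow_zero]
      rw [sum_del_right (E := E) hρσ (i-1) (fun t => E.d i (i-1) σ t),
          sum_del_left (E := E) hρσ i (fun t => E.d i (i-1) t ρ)]
    · rw [sum_empty_interval hρσ, sum_empty_interval hρσ]
  | succ k ih =>
    intro i σ ρ
    have e1 : ∀ τ : Iv ρ σ, E.d i (i-1) σ τ.1 ≫ nupow E s (k+1) (i-1) τ.1 ρ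
        = ∑ π : Iv ρ τ.1, E.d i (i-1) σ τ.1 ≫ (nu E s (i-1) τ.1 π.1 ≫ nupow E s k (i-1) π.1 ρ) := by
      intro τ
      rw [nupow_succ, Preadditive.comp_sum]
    rw [Finset.sum_congr rfl (fun τ _ => e1 τ)]
    rw [← interval_fubini ρ σ (fun t p =>
      E.d i (i-1) σ p ≫ (nu E s (i-1) p t ≫ nupow E s k (i-1) t ρ))]
    have e2 : ∀ τ : Iv ρ σ, (∑ π : Iv τ.1 σ,
          E.d i (i-1) σ π.1 ≫ (nu E s (i-1) π.1 τ.1 ≫ nupow E s k (i-1) τ.1 ρ))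
        = ∑ π : Iv τ.1 σ, nu E s i σ π.1 ≫ (E.d i (i-1) π.1 τ.1 ≫ nupow E s k (i-1) τ.1 ρ) := by
      intro τ
      have a1 : ∀ π : Iv τ.1 σ, E.d i (i-1) σ π.1 ≫ (nu E s (i-1) π.1 τ.1 ≫ nupow E s k (i-1) τ.1 ρ)
          = (E.d i (i-1) σ π.1 ≫ nu E s (i-1) π.1 τ.1) ≫ nupow E s k (i-1) τ.1 ρ :=
        fun π => (Category.assoc _ _ _).symm
      have a2 : ∀ π : Iv τ.1 σ, nu E s i σ π.1 ≫ (E.d i (i-1) π.1 τ.1 ≫ nupow E s k (i-1) τ.1 ρ)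
          = (nu E s i σ π.1 ≫ E.d i (i-1) π.1 τ.1) ≫ nupow E s k (i-1) τ.1 ρ :=
        fun π => (Category.assoc _ _ _).symm
      rw [Finset.sum_congr rfl (fun π _ => a1 π), Finset.sum_congr rfl (fun π _ => a2 π),
          ← Preadditive.sum_comp, ← Preadditive.sum_comp, d_nu hs i σ τ.1]
    rw [Finset.sum_congr rfl (fun τ _ => e2 τ)]
    rw [interval_fubini ρ σ (fun t p =>
      nu E s i σ p ≫ (E.d i (i-1) p t ≫ nupow E s k (i-1) t ρ))]
    have e4 : ∀ π : Iv ρ σ, (∑ τ : Iv ρ π.1,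
          nu E s i σ π.1 ≫ (E.d i (i-1) π.1 τ.1 ≫ nupow E s k (i-1) τ.1 ρ))
        = ∑ τ : Iv ρ π.1, (nu E s i σ π.1 ≫ nupow E s k i π.1 τ.1) ≫ E.d i (i-1) τ.1 ρ := by
      intro π
      rw [← Preadditive.comp_sum, ih i π.1 ρ, Preadditive.comp_sum]
      exact Finset.sum_congr rfl (fun τ _ => (Category.assoc _ _ _).symm)
    rw [Finset.sum_congr rfl (fun π _ => e4 π)]
    rw [← interval_fubini ρ σ (fun t p =>
      (nu E s i σ p ≫ nupow E s k i p t) ≫ E.d i (i-1) t ρ)]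
    refine Finset.sum_congr rfl (fun τ _ => ?_)
    rw [← Preadditive.sum_comp, ← nupow_succ]

include hs in
lemma nupow_trunc {ρ σ : X} {M : ℕ} (h : Fintype.card (Iv ρ σ) ≤ M) (i : ℤ) :
    ∑ k ∈ Finset.range M, nupow E s k i σ ρ
      = ∑ k ∈ Finset.range (Fintype.card (Iv ρ σ)), nupow E s k i σ ρ :=
  (Finset.sum_subset (Finset.range_subset_range.2 h) (fun k _ hk =>
    nupow_nil hs k i σ ρ (by
      simp only [Finset.mem_range, not_lt] at hk
      omega))).symm

variable (E s) in
/-- The global contraction operator. -/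
noncomputable def Gam (i j : ℤ) (σ ρ : X) : E.ob i σ ⟶ E.ob j ρ :=
  if _ : j = i + 1 then
    (∑ k ∈ Finset.range (Fintype.card (Iv ρ σ)), nupow E s k i σ ρ) ≫ s ρ i j
  else 0

omit hs in
lemma Gam_shape (i j : ℤ) (σ ρ : X) (h : ¬(ρ ≤ σ ∧ j = i + 1)) : Gam E s i j σ ρ = 0 := by
  rw [Gam]
  by_cases hj : j = i + 1
  · rw [dif_pos hj]
    have hρσ : ¬ρ ≤ σ := fun hh => h ⟨hh, hj⟩
    rw [Finset.sum_congr rfl (fun k _ => nupow_shape k hρσ i), Finset.sum_const_zero, zero_comp]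
  · rw [dif_neg hj]

include hs in
theorem Gam_eq (i : ℤ) (σ ρ : X) :
    (∑ τ : Iv ρ σ, E.d i (i-1) σ τ.1 ≫ Gam E s (i-1) i τ.1 ρ)
      + (∑ τ : Iv ρ σ, Gam E s i (i+1) σ τ.1 ≫ E.d (i+1) i τ.1 ρ)
      = del E i σ ρ := by
  by_cases hρσ : ρ ≤ σ
  · set M := Fintype.card (Iv ρ σ) with hM
    have t1 : (∑ τ : Iv ρ σ, E.d i (i-1) σ τ.1 ≫ Gam E s (i-1) i τ.1 ρ)
        = ∑ k ∈ Finset.range M, ∑ τ : Iv ρ σ,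
            nupow E s k i σ τ.1 ≫ (E.d i (i-1) τ.1 ρ ≫ s ρ (i-1) i) := by
      have g1 : ∀ τ : Iv ρ σ, E.d i (i-1) σ τ.1 ≫ Gam E s (i-1) i τ.1 ρ
          = ∑ k ∈ Finset.range M, E.d i (i-1) σ τ.1 ≫ nupow E s k (i-1) τ.1 ρ ≫ s ρ (i-1) i := by
        intro τ
        rw [Gam, dif_pos (show i = (i-1) + 1 from by omega),
            ← nupow_trunc hs (M := M) (card_Iv_le τ.2.2) (i-1),
            Preadditive.sum_comp, Preadditive.comp_sum]
      rw [Finset.sum_congr rfl (fun τ _ => g1 τ), Finset.sum_comm]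
      refine Finset.sum_congr rfl (fun k _ => ?_)
      have a1 : ∀ τ : Iv ρ σ, E.d i (i-1) σ τ.1 ≫ nupow E s k (i-1) τ.1 ρ ≫ s ρ (i-1) i
          = (E.d i (i-1) σ τ.1 ≫ nupow E s k (i-1) τ.1 ρ) ≫ s ρ (i-1) i :=
        fun τ => (Category.assoc _ _ _).symm
      rw [Finset.sum_congr rfl (fun τ _ => a1 τ), ← Preadditive.sum_comp, d_nupow hs k i σ ρ,
          Preadditive.sum_comp]
      exact Finset.sum_congr rfl (fun τ _ => Category.assoc _ _ _)
    have t2 : (∑ τ : Iv ρ σ, Gam E s i (i+1) σ τ.1 ≫ E.d (i+1) i τ.1 ρ)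
        = ∑ k ∈ Finset.range M, ∑ τ : Iv ρ σ,
            nupow E s k i σ τ.1 ≫ (s τ.1 i (i+1) ≫ E.d (i+1) i τ.1 ρ) := by
      have g2 : ∀ τ : Iv ρ σ, Gam E s i (i+1) σ τ.1 ≫ E.d (i+1) i τ.1 ρ
          = ∑ k ∈ Finset.range M,
              nupow E s k i σ τ.1 ≫ (s τ.1 i (i+1) ≫ E.d (i+1) i τ.1 ρ) := by
        intro τ
        rw [Gam, dif_pos rfl, ← nupow_trunc hs (M := M) (card_Iv_le' τ.2.1) i,
            Category.assoc, Preadditive.sum_comp]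
      rw [Finset.sum_congr rfl (fun τ _ => g2 τ), Finset.sum_comm]
    rw [t1, t2, ← Finset.sum_add_distrib]
    have t3 : ∀ k ∈ Finset.range M, ((∑ τ : Iv ρ σ,
          nupow E s k i σ τ.1 ≫ (E.d i (i-1) τ.1 ρ ≫ s ρ (i-1) i))
        + ∑ τ : Iv ρ σ, nupow E s k i σ τ.1 ≫ (s τ.1 i (i+1) ≫ E.d (i+1) i τ.1 ρ))
        = nupow E s k i σ ρ - nupow E s (k+1) i σ ρ := by
      intro k _
      rw [← Finset.sum_add_distrib]
      have br : ∀ τ : Iv ρ σ,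
          (nupow E s k i σ τ.1 ≫ (E.d i (i-1) τ.1 ρ ≫ s ρ (i-1) i)
            + nupow E s k i σ τ.1 ≫ (s τ.1 i (i+1) ≫ E.d (i+1) i τ.1 ρ))
          = nupow E s k i σ τ.1 ≫ del E i τ.1 ρ - nupow E s k i σ τ.1 ≫ nu E s i τ.1 ρ := by
        intro τ
        rw [← Preadditive.comp_add, ← Preadditive.comp_sub]
        congr 1
        rw [nu]
        abel
      rw [Finset.sum_congr rfl (fun τ _ => br τ), Finset.sum_sub_distrib,
          sum_del_right (E := E) hρσ i (fun t => nupow E s k i σ t),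
          nupow_mul_right hs k i σ ρ]
    rw [Finset.sum_congr rfl t3,
        Finset.sum_range_sub' (fun k => nupow E s k i σ ρ) M, nupow_zero,
        nupow_nil hs M i σ ρ (le_of_eq hM.symm), sub_zero]
  · rw [sum_empty_interval hρσ, sum_empty_interval hρσ, del_ne E i (fun e => hρσ (le_of_eq e)),
      add_zero]

end Contract
section Cone
open CategoryTheory.Limits
variable {X : Type} [PartialOrder X] [∀ ρ σ : X, Fintype {τ : X // ρ ≤ τ ∧ τ ≤ σ}]
variable {A : Type} [Category A] [Preadditive A]
variable (C D : GCx X A) (f : HomGC C D)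

noncomputable def bGen (i j : ℤ) (σ τ : X) : C.ob (i-1) σ ⟶ D.ob j τ :=
  if h : j = i - 1 then f.f (i-1) σ τ ≫ eqToHom (by rw [h]) else 0

@[simp] lemma bGen_diag (i : ℤ) (σ τ : X) : bGen C D f i (i-1) σ τ = f.f (i-1) σ τ := by
  simp [bGen]

lemma bGen_eq {i j : ℤ} (h : j = i - 1) (σ τ : X) :
    bGen C D f i j σ τ
      = eqToHom (show C.ob (i-1) σ = C.ob j σ by rw [h]) ≫ f.f j σ τ := by
  subst h; simp [bGen]

lemma fcomm_diag (i : ℤ) (σ : X) :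
    C.d i (i-1) σ σ ≫ f.f (i-1) σ σ = f.f i σ σ ≫ D.d i (i-1) σ σ := by
  have h := f.comm i σ σ
  rw [sum_self σ (fun τ => C.d i (i-1) σ τ.1 ≫ f.f (i-1) τ.1 σ),
      sum_self σ (fun τ => f.f i σ τ.1 ≫ D.d i (i-1) τ.1 σ)] at h
  exact h

lemma dsq_diag (E : GCx X A) (i : ℤ) (σ : X) :
    E.d i (i-1) σ σ ≫ E.d (i-1) (i-1-1) σ σ = 0 := by
  have h := E.dsq i σ σ
  rw [sum_self σ (fun τ => E.d i (i-1) σ τ.1 ≫ E.d (i-1) (i-1-1) τ.1 σ)] at h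
  exact h

noncomputable abbrev obCone (i : ℤ) (σ : X) : PC A := ⟨C.ob (i-1) σ, D.ob i σ⟩

@[simp] lemma obCone_fst (i : ℤ) (σ : X) : (obCone C D i σ).fst = C.ob (i-1) σ := rfl
@[simp] lemma obCone_snd (i : ℤ) (σ : X) : (obCone C D i σ).snd = D.ob i σ := rfl

noncomputable def dCone (i j : ℤ) (σ τ : X) : obCone C D i σ ⟶ obCone C D j τ :=
  ⟨-C.d (i-1) (j-1) σ τ, bGen C D f i j σ τ, 0, D.d i j σ τ⟩

@[simp] lemma dCone_a (i j : ℤ) (σ τ : X) :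
    (dCone C D f i j σ τ).a = -C.d (i-1) (j-1) σ τ := rfl
@[simp] lemma dCone_b (i j : ℤ) (σ τ : X) :
    (dCone C D f i j σ τ).b = bGen C D f i j σ τ := rfl
@[simp] lemma dCone_c (i j : ℤ) (σ τ : X) :
    (dCone C D f i j σ τ).c = 0 := rfl
@[simp] lemma dCone_e (i j : ℤ) (σ τ : X) :
    (dCone C D f i j σ τ).e = D.d i j σ τ := rfl

noncomputable abbrev MCone : GCx X (PC A) where
  ob := obCone C D
  d := dCone C D f
  shape i j σ τ h := by
    refine PHom.ext ?_ ?_ ?_ ?_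
    · show -C.d (i-1) (j-1) σ τ = (0 : _ ⟶ _)
      rw [C.shape (i-1) (j-1) σ τ (fun hh => h ⟨hh.1, by omega⟩), neg_zero]
    · show bGen C D f i j σ τ = (0 : _ ⟶ _)
      rw [bGen]
      by_cases hj : j = i - 1
      · rw [dif_pos hj, f.shape (i-1) σ τ (fun hh => h ⟨hh, hj⟩), zero_comp]
      · rw [dif_neg hj]
    · rfl
    · exact D.shape i j σ τ h
  dsq i σ ρ := by
    refine PHom.ext ?_ ?_ ?_ ?_
    · rw [PHom.sum_a, PHom.zero_a,
        Finset.sum_congr rfl (fun (τ : Iv ρ σ) _ =>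
          show (dCone C D f i (i-1) σ τ.1 ≫ dCone C D f (i-1) (i-1-1) τ.1 ρ).a
            = C.d (i-1) (i-1-1) σ τ.1 ≫ C.d (i-1-1) (i-1-1-1) τ.1 ρ from by simp)]
      exact C.dsq (i-1) σ ρ
    · rw [PHom.sum_b, PHom.zero_b,
        Finset.sum_congr rfl (fun (τ : Iv ρ σ) _ =>
          show (dCone C D f i (i-1) σ τ.1 ≫ dCone C D f (i-1) (i-1-1) τ.1 ρ).b
            = -(C.d (i-1) (i-1-1) σ τ.1 ≫ f.f (i-1-1) τ.1 ρ)
              + f.f (i-1) σ τ.1 ≫ D.d (i-1) (i-1-1) τ.1 ρ from by simp)]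
      rw [Finset.sum_add_distrib, Finset.sum_neg_distrib, f.comm (i-1) σ ρ, neg_add_cancel]
    · rw [PHom.sum_c, PHom.zero_c]
      refine Finset.sum_eq_zero (fun τ _ => ?_)
      rw [PHom.comp_c]
      simp
    · rw [PHom.sum_e, PHom.zero_e,
        Finset.sum_congr rfl (fun (τ : Iv ρ σ) _ =>
          show (dCone C D f i (i-1) σ τ.1 ≫ dCone C D f (i-1) (i-1-1) τ.1 ρ).e
            = D.d i (i-1) σ τ.1 ≫ D.d (i-1) (i-1-1) τ.1 ρ from by simp)]
      exact D.dsq i σ ρ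
  bounded := by
    obtain ⟨N1, h1⟩ := C.bounded
    obtain ⟨N2, h2⟩ := D.bounded
    refine ⟨N1 + N2 + 1, fun i σ hi => ?_⟩
    have hb : |i| - 1 ≤ |i - 1| := by
      have := abs_sub_abs_le_abs_sub i 1
      simpa using this
    push_cast at hi
    exact PC.isZero (h1 (i-1) σ (by omega)) (h2 i σ (by omega))

@[simp] lemma MCone_ob (i : ℤ) (σ : X) : (MCone C D f).ob i σ = obCone C D i σ := rfl
@[simp] lemma MCone_d (i j : ℤ) (σ τ : X) : (MCone C D f).d i j σ τ = dCone C D f i j σ τ := rfl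

end Cone
section LocalContraction
open CategoryTheory.Limits
variable {X : Type} [PartialOrder X] [∀ ρ σ : X, Fintype {τ : X // ρ ≤ τ ∧ τ ≤ σ}]
variable {A : Type} [Category A] [Preadditive A]
variable (C D : GCx X A) (f : HomGC C D)
variable (g : ∀ (σ : X) (i : ℤ), D.ob i σ ⟶ C.ob i σ)
variable (P : ∀ (σ : X) (i j : ℤ), C.ob i σ ⟶ C.ob j σ)
variable (Q : ∀ (σ : X) (i j : ℤ), D.ob i σ ⟶ D.ob j σ)

noncomputable def rdv (σ : X) (i j : ℤ) : C.ob i σ ⟶ D.ob j σ :=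
  P σ i j ≫ f.f j σ σ - f.f i σ σ ≫ Q σ i j

noncomputable def Qh (σ : X) (i j : ℤ) : D.ob i σ ⟶ D.ob j σ :=
  Q σ i j + g σ i ≫ rdv C D f P Q σ i j

noncomputable def Tv (σ : X) (i j : ℤ) : C.ob i σ ⟶ D.ob j σ :=
  -(P σ i (j-1) ≫ rdv C D f P Q σ (j-1) j)

noncomputable def ggv (σ : X) (i k : ℤ) : D.ob i σ ⟶ C.ob k σ :=
  if h : k = i then g σ i ≫ eqToHom (by rw [h]) else 0

@[simp] lemma ggv_diag (σ : X) (i : ℤ) : ggv C D g σ i i = g σ i := by simp [ggv]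

noncomputable def sCone (σ : X) (i j : ℤ) : obCone C D i σ ⟶ obCone C D j σ :=
  ⟨-P σ (i-1) (j-1), Tv C D f P Q σ (i-1) j, ggv C D g σ i (j-1),
    Qh C D f g P Q σ i j⟩

@[simp] lemma sCone_a (σ : X) (i j : ℤ) :
    (sCone C D f g P Q σ i j).a = -P σ (i-1) (j-1) := rfl
@[simp] lemma sCone_b (σ : X) (i j : ℤ) :
    (sCone C D f g P Q σ i j).b = Tv C D f P Q σ (i-1) j := rfl
@[simp] lemma sCone_c (σ : X) (i j : ℤ) :
    (sCone C D f g P Q σ i j).c = ggv C D g σ i (j-1) := rfl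
@[simp] lemma sCone_e (σ : X) (i j : ℤ) :
    (sCone C D f g P Q σ i j).e = Qh C D f g P Q σ i j := rfl

variable (hg : ∀ (σ : X) (i : ℤ), D.d i (i-1) σ σ ≫ g σ (i-1) = g σ i ≫ C.d i (i-1) σ σ)
variable (hP : ∀ (σ : X) (i : ℤ), C.d i (i-1) σ σ ≫ P σ (i-1) i + P σ i (i+1) ≫ C.d (i+1) i σ σ
  = 𝟙 (C.ob i σ) - f.f i σ σ ≫ g σ i)
variable (hQ : ∀ (σ : X) (i : ℤ), D.d i (i-1) σ σ ≫ Q σ (i-1) i + Q σ i (i+1) ≫ D.d (i+1) i σ σ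
  = 𝟙 (D.ob i σ) - g σ i ≫ f.f i σ σ)

include hP hQ in
lemma rdv_d (σ : X) (i : ℤ) :
    rdv C D f P Q σ i (i+1) ≫ D.d (i+1) i σ σ
      = -(C.d i (i-1) σ σ ≫ rdv C D f P Q σ (i-1) i) := by
  have hf1 : f.f (i+1) σ σ ≫ D.d (i+1) i σ σ = C.d (i+1) i σ σ ≫ f.f i σ σ := by
    have h := fcomm_diag C D f (i+1) σ
    rw [show i+1-1 = i from by omega] at h
    exact h.symm
  have hf0 : f.f i σ σ ≫ D.d i (i-1) σ σ = C.d i (i-1) σ σ ≫ f.f (i-1) σ σ :=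
    (fcomm_diag C D f i σ).symm
  have hQ' : Q σ i (i+1) ≫ D.d (i+1) i σ σ
      = 𝟙 (D.ob i σ) - g σ i ≫ f.f i σ σ - D.d i (i-1) σ σ ≫ Q σ (i-1) i := by
    rw [← hQ σ i]; abel
  have hP' : P σ i (i+1) ≫ C.d (i+1) i σ σ
      = 𝟙 (C.ob i σ) - f.f i σ σ ≫ g σ i - C.d i (i-1) σ σ ≫ P σ (i-1) i := by
    rw [← hP σ i]; abel
  rw [rdv, rdv, Preadditive.sub_comp]
  have e1 : (P σ i (i+1) ≫ f.f (i+1) σ σ) ≫ D.d (i+1) i σ σ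
      = (𝟙 (C.ob i σ) - f.f i σ σ ≫ g σ i - C.d i (i-1) σ σ ≫ P σ (i-1) i) ≫ f.f i σ σ := by
    rw [Category.assoc, hf1, ← Category.assoc, hP']
  have e2 : (f.f i σ σ ≫ Q σ i (i+1)) ≫ D.d (i+1) i σ σ
      = f.f i σ σ ≫ (𝟙 (D.ob i σ) - g σ i ≫ f.f i σ σ - D.d i (i-1) σ σ ≫ Q σ (i-1) i) := by
    rw [Category.assoc, hQ']
  rw [e1, e2]
  have e3 : f.f i σ σ ≫ (D.d i (i-1) σ σ ≫ Q σ (i-1) i)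
      = C.d i (i-1) σ σ ≫ (f.f (i-1) σ σ ≫ Q σ (i-1) i) := by
    rw [← Category.assoc, hf0, Category.assoc]
  simp only [Preadditive.sub_comp, Preadditive.comp_sub, Category.id_comp, Category.comp_id,
    Preadditive.comp_neg, Preadditive.neg_comp, Category.assoc]
  rw [e3]
  abel

include hP in
lemma loc_a (σ : X) (i : ℤ) :
    C.d (i-1) (i-1-1) σ σ ≫ P σ (i-1-1) (i-1) + f.f (i-1) σ σ ≫ g σ (i-1)
      + P σ (i-1) i ≫ C.d i (i-1) σ σ = 𝟙 (C.ob (i-1) σ) := by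
  have h := hP σ (i-1)
  rw [show i-1+1 = i from by omega] at h
  calc C.d (i-1) (i-1-1) σ σ ≫ P σ (i-1-1) (i-1) + f.f (i-1) σ σ ≫ g σ (i-1)
      + P σ (i-1) i ≫ C.d i (i-1) σ σ
      = (C.d (i-1) (i-1-1) σ σ ≫ P σ (i-1-1) (i-1) + P σ (i-1) i ≫ C.d i (i-1) σ σ)
        + f.f (i-1) σ σ ≫ g σ (i-1) := by abel
    _ = (𝟙 (C.ob (i-1) σ) - f.f (i-1) σ σ ≫ g σ (i-1)) + f.f (i-1) σ σ ≫ g σ (i-1) := by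
        rw [h]
    _ = 𝟙 (C.ob (i-1) σ) := by abel

include hP hQ in
lemma loc_b (σ : X) (i : ℤ) :
    C.d (i-1) (i-1-1) σ σ ≫ (P σ (i-1-1) (i-1) ≫ rdv C D f P Q σ (i-1) i)
      + f.f (i-1) σ σ ≫ Qh C D f g P Q σ (i-1) i
      - P σ (i-1) i ≫ f.f i σ σ
      - (P σ (i-1) i ≫ rdv C D f P Q σ i (i+1)) ≫ D.d (i+1) i σ σ = 0 := by
  have h4 : (P σ (i-1) i ≫ rdv C D f P Q σ i (i+1)) ≫ D.d (i+1) i σ σ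
      = -((P σ (i-1) i ≫ C.d i (i-1) σ σ) ≫ rdv C D f P Q σ (i-1) i) := by
    rw [Category.assoc, rdv_d C D f g P Q hP hQ σ i, Preadditive.comp_neg, Category.assoc]
  have h5 : f.f (i-1) σ σ ≫ Qh C D f g P Q σ (i-1) i
      = f.f (i-1) σ σ ≫ Q σ (i-1) i
        + (f.f (i-1) σ σ ≫ g σ (i-1)) ≫ rdv C D f P Q σ (i-1) i := by
    rw [Qh, Preadditive.comp_add, Category.assoc]
  have h6 : C.d (i-1) (i-1-1) σ σ ≫ (P σ (i-1-1) (i-1) ≫ rdv C D f P Q σ (i-1) i)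
      = (C.d (i-1) (i-1-1) σ σ ≫ P σ (i-1-1) (i-1)) ≫ rdv C D f P Q σ (i-1) i := by
    rw [Category.assoc]
  rw [h4, h5, h6, sub_neg_eq_add]
  have h8 : ((C.d (i-1) (i-1-1) σ σ ≫ P σ (i-1-1) (i-1)) ≫ rdv C D f P Q σ (i-1) i
        + (f.f (i-1) σ σ ≫ g σ (i-1)) ≫ rdv C D f P Q σ (i-1) i)
        + (P σ (i-1) i ≫ C.d i (i-1) σ σ) ≫ rdv C D f P Q σ (i-1) i
      = rdv C D f P Q σ (i-1) i := by
    rw [← Preadditive.add_comp, ← Preadditive.add_comp, loc_a C D f g P hP σ i,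
      Category.id_comp]
  have h9 : (C.d (i-1) (i-1-1) σ σ ≫ P σ (i-1-1) (i-1)) ≫ rdv C D f P Q σ (i-1) i
      + (f.f (i-1) σ σ ≫ Q σ (i-1) i
        + (f.f (i-1) σ σ ≫ g σ (i-1)) ≫ rdv C D f P Q σ (i-1) i)
      - P σ (i-1) i ≫ f.f i σ σ
      + (P σ (i-1) i ≫ C.d i (i-1) σ σ) ≫ rdv C D f P Q σ (i-1) i
      = (((C.d (i-1) (i-1-1) σ σ ≫ P σ (i-1-1) (i-1)) ≫ rdv C D f P Q σ (i-1) i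
        + (f.f (i-1) σ σ ≫ g σ (i-1)) ≫ rdv C D f P Q σ (i-1) i)
        + (P σ (i-1) i ≫ C.d i (i-1) σ σ) ≫ rdv C D f P Q σ (i-1) i)
        + (f.f (i-1) σ σ ≫ Q σ (i-1) i - P σ (i-1) i ≫ f.f i σ σ) := by abel
  rw [h9, h8, rdv]
  abel

include hg hP hQ in
lemma loc_e (σ : X) (i : ℤ) :
    D.d i (i-1) σ σ ≫ Qh C D f g P Q σ (i-1) i
      + g σ i ≫ f.f i σ σ
      + Qh C D f g P Q σ i (i+1) ≫ D.d (i+1) i σ σ = 𝟙 (D.ob i σ) := by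
  have h1 : D.d i (i-1) σ σ ≫ Qh C D f g P Q σ (i-1) i
      = D.d i (i-1) σ σ ≫ Q σ (i-1) i
        + (g σ i ≫ C.d i (i-1) σ σ) ≫ rdv C D f P Q σ (i-1) i := by
    rw [Qh, Preadditive.comp_add, ← Category.assoc, hg σ i]
  have h2 : Qh C D f g P Q σ i (i+1) ≫ D.d (i+1) i σ σ
      = Q σ i (i+1) ≫ D.d (i+1) i σ σ
        - (g σ i ≫ C.d i (i-1) σ σ) ≫ rdv C D f P Q σ (i-1) i := by
    rw [Qh, Preadditive.add_comp, Category.assoc, rdv_d C D f g P Q hP hQ σ i]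
    simp only [Preadditive.comp_neg, Category.assoc]
    abel
  rw [h1, h2]
  have h3 : D.d i (i-1) σ σ ≫ Q σ (i-1) i
        + (g σ i ≫ C.d i (i-1) σ σ) ≫ rdv C D f P Q σ (i-1) i
      + g σ i ≫ f.f i σ σ
      + (Q σ i (i+1) ≫ D.d (i+1) i σ σ
        - (g σ i ≫ C.d i (i-1) σ σ) ≫ rdv C D f P Q σ (i-1) i)
      = (D.d i (i-1) σ σ ≫ Q σ (i-1) i + Q σ i (i+1) ≫ D.d (i+1) i σ σ)
        + g σ i ≫ f.f i σ σ := by abel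
  rw [h3, hQ σ i]
  abel

end LocalContraction
section CastHelpers
variable {A : Type} [Category A] [Preadditive A]

lemma cast_pair {Y Z : A} {F : ℤ → A} (u : ∀ m : ℤ, Y ⟶ F m) (v : ∀ m : ℤ, F m ⟶ Z)
    {k k' : ℤ} (h : k = k') : u k ≫ v k = u k' ≫ v k' := by subst h; rfl

lemma cast_eqToHom {Y : A} {F : ℤ → A} (u : ∀ m : ℤ, Y ⟶ F m) {k k' : ℤ} (h : k = k')
    (pf : F k = F k') : u k ≫ eqToHom pf = u k' := by subst h; simp

lemma cast_eqToHom' {Y : A} {F : ℤ → A} (u : ∀ m : ℤ, F m ⟶ Y) {k k' : ℤ} (h : k' = k)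
    (pf : F k = F k') : eqToHom pf ≫ u k' = u k := by subst h; simp

lemma cast_fun {M : Type*} [AddCommMonoid M] (u : ℤ → M) {k k' : ℤ} (h : k = k') :
    u k = u k' := by subst h; rfl

end CastHelpers

section SconeHS
open CategoryTheory.Limits
variable {X : Type} [PartialOrder X] [∀ ρ σ : X, Fintype {τ : X // ρ ≤ τ ∧ τ ≤ σ}]
variable {A : Type} [Category A] [Preadditive A]
variable (C D : GCx X A) (f : HomGC C D)
variable (g : ∀ (σ : X) (i : ℤ), D.ob i σ ⟶ C.ob i σ)
variable (P : ∀ (σ : X) (i j : ℤ), C.ob i σ ⟶ C.ob j σ)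
variable (Q : ∀ (σ : X) (i j : ℤ), D.ob i σ ⟶ D.ob j σ)
variable (hg : ∀ (σ : X) (i : ℤ), D.d i (i-1) σ σ ≫ g σ (i-1) = g σ i ≫ C.d i (i-1) σ σ)
variable (hP : ∀ (σ : X) (i : ℤ), C.d i (i-1) σ σ ≫ P σ (i-1) i + P σ i (i+1) ≫ C.d (i+1) i σ σ
  = 𝟙 (C.ob i σ) - f.f i σ σ ≫ g σ i)
variable (hQ : ∀ (σ : X) (i : ℤ), D.d i (i-1) σ σ ≫ Q σ (i-1) i + Q σ i (i+1) ≫ D.d (i+1) i σ σ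
  = 𝟙 (D.ob i σ) - g σ i ≫ f.f i σ σ)

include hg hP hQ in
lemma sCone_hs (σ : X) (i : ℤ) :
    dCone C D f i (i-1) σ σ ≫ sCone C D f g P Q σ (i-1) i
      + sCone C D f g P Q σ i (i+1) ≫ dCone C D f (i+1) i σ σ
      = 𝟙 (obCone C D i σ) := by
  have hone : i+1-1 = i := by omega
  refine PHom.ext ?_ ?_ ?_ ?_
  · -- component a
    simp only [PHom.add_a, PHom.comp_a, dCone_a, dCone_b, dCone_c, sCone_a, sCone_c,
      sCone_b, PHom.id_a, bGen_diag, ggv_diag, Preadditive.neg_comp, Preadditive.comp_neg,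
      neg_neg, comp_zero, zero_comp, add_zero, zero_add]
    have e7 : P σ (i-1) (i+1-1) ≫ C.d (i+1-1) (i-1) σ σ
        = P σ (i-1) i ≫ C.d i (i-1) σ σ :=
      cast_pair (fun m => P σ (i-1) m) (fun m => C.d m (i-1) σ σ) hone
    rw [e7]
    exact loc_a C D f g P hP σ i
  · -- component b
    simp only [PHom.add_b, PHom.comp_b, dCone_a, dCone_b, dCone_c, dCone_e, sCone_a,
      sCone_b, sCone_c, sCone_e, PHom.id_b, bGen_diag, ggv_diag, Preadditive.neg_comp,
      Preadditive.comp_neg, neg_neg, comp_zero, zero_comp, add_zero, zero_add, Tv]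
    have e1 : P σ (i-1) (i+1-1) ≫ bGen C D f (i+1) i σ σ = P σ (i-1) i ≫ f.f i σ σ := by
      rw [bGen_eq C D f (show (i:ℤ) = i+1-1 by omega) σ σ, ← Category.assoc]
      exact congrArg (· ≫ f.f i σ σ) (cast_eqToHom (fun m => P σ (i-1) m) hone _)
    have e2 : P σ (i-1) (i+1-1) ≫ rdv C D f P Q σ (i+1-1) (i+1)
        = P σ (i-1) i ≫ rdv C D f P Q σ i (i+1) :=
      cast_pair (fun m => P σ (i-1) m) (fun m => rdv C D f P Q σ m (i+1)) hone
    rw [e1, e2]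
    have hb := loc_b C D f g P Q hP hQ σ i
    simp only [Category.assoc, sub_eq_add_neg, Preadditive.neg_comp] at hb ⊢
    abel_nf at hb ⊢
    exact hb
  · -- component c
    simp only [PHom.add_c, PHom.comp_c, dCone_a, dCone_c, dCone_e, sCone_a, sCone_c,
      PHom.id_c, ggv_diag, Preadditive.neg_comp, Preadditive.comp_neg,
      neg_neg, comp_zero, zero_comp, add_zero, zero_add]
    have e3 : ggv C D g σ i (i+1-1) ≫ C.d (i+1-1) (i-1) σ σ = g σ i ≫ C.d i (i-1) σ σ := by
      have := cast_pair (fun m => ggv C D g σ i m) (fun m => C.d m (i-1) σ σ) hone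
      simpa using this
    rw [e3, hg σ i]
    abel
  · -- component e
    simp only [PHom.add_e, PHom.comp_e, dCone_b, dCone_c, dCone_e, sCone_b, sCone_c,
      sCone_e, PHom.id_e, ggv_diag, Preadditive.neg_comp, Preadditive.comp_neg,
      neg_neg, comp_zero, zero_comp, add_zero, zero_add]
    have e4 : ggv C D g σ i (i+1-1) ≫ bGen C D f (i+1) i σ σ = g σ i ≫ f.f i σ σ := by
      rw [bGen_eq C D f (show (i:ℤ) = i+1-1 by omega) σ σ, ← Category.assoc]
      exact congrArg (· ≫ f.f i σ σ)
        ((cast_eqToHom (fun m => ggv C D g σ i m) hone _).trans (ggv_diag C D g σ i))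
    rw [e4, ← add_assoc]
    exact loc_e C D f g P Q hg hP hQ σ i

end SconeHS
section Extract
open CategoryTheory.Limits
variable {X : Type} [PartialOrder X] [∀ ρ σ : X, Fintype {τ : X // ρ ≤ τ ∧ τ ≤ σ}]
variable {B : Type} [Category B] [Preadditive B]

lemma Gam_cast (E : GCx X B) (s : ∀ (σ : X) (i j : ℤ), E.ob i σ ⟶ E.ob j σ)
    {i i' j j' : ℤ} (hi : i = i') (hj : j = j') (σ τ : X) :
    Gam E s i j σ τ
      = eqToHom (by rw [hi]) ≫ Gam E s i' j' σ τ ≫ eqToHom (by rw [hj]) := by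
  subst hi; subst hj; simp

variable {A : Type} [Category A] [Preadditive A]
variable (C D : GCx X A) (f : HomGC C D)
variable (sC : ∀ (σ : X) (i j : ℤ), obCone C D i σ ⟶ obCone C D j σ)

lemma del_cone_a (i : ℤ) (σ ρ : X) :
    (del (MCone C D f) i σ ρ).a
      = (if h : ρ = σ then eqToHom (show C.ob (i-1) σ = C.ob (i-1) ρ by rw [h]) else 0) := by
  by_cases h : ρ = σ
  · subst h; simp [del]
  · simp [del, h]

lemma del_cone_c (i : ℤ) (σ ρ : X) : (del (MCone C D f) i σ ρ).c = 0 := by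
  by_cases h : ρ = σ
  · subst h; simp [del]
  · simp [del, h]

lemma del_cone_e (i : ℤ) (σ ρ : X) :
    (del (MCone C D f) i σ ρ).e
      = (if h : ρ = σ then eqToHom (show D.ob i σ = D.ob i ρ by rw [h]) else 0) := by
  by_cases h : ρ = σ
  · subst h; simp [del]
  · simp [del, h]

noncomputable def gfD (i : ℤ) (σ τ : X) : D.ob i σ ⟶ C.ob i τ :=
  (Gam (MCone C D f) sC i (i+1) σ τ).c
    ≫ eqToHom (show C.ob (i+1-1) τ = C.ob i τ by rw [show i+1-1 = i from by omega])

noncomputable def PfD (i j : ℤ) (σ τ : X) : C.ob i σ ⟶ C.ob j τ :=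
  -(eqToHom (show C.ob i σ = C.ob (i+1-1) σ by rw [show i+1-1 = i from by omega])
    ≫ (Gam (MCone C D f) sC (i+1) (j+1) σ τ).a
    ≫ eqToHom (show C.ob (j+1-1) τ = C.ob j τ by rw [show j+1-1 = j from by omega]))

noncomputable def QfD (i j : ℤ) (σ τ : X) : D.ob i σ ⟶ D.ob j τ :=
  (Gam (MCone C D f) sC i j σ τ).e

lemma gfD_shape (i : ℤ) (σ τ : X) (h : ¬τ ≤ σ) : gfD C D f sC i σ τ = 0 := by
  rw [gfD, Gam_shape _ _ _ _ (fun hh => h hh.1), PHom.zero_c, zero_comp]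

lemma PfD_shape (i j : ℤ) (σ τ : X) (h : ¬(τ ≤ σ ∧ j = i + 1)) : PfD C D f sC i j σ τ = 0 := by
  rw [PfD, Gam_shape _ _ _ _ (fun hh => h ⟨hh.1, by omega⟩), PHom.zero_a, zero_comp, comp_zero, neg_zero]

lemma QfD_shape (i j : ℤ) (σ τ : X) (h : ¬(τ ≤ σ ∧ j = i + 1)) : QfD C D f sC i j σ τ = 0 := by
  rw [QfD, Gam_shape _ _ _ _ h, PHom.zero_e]

variable (hsC : ∀ (σ : X) (i : ℤ),
  dCone C D f i (i-1) σ σ ≫ sC σ (i-1) i + sC σ i (i+1) ≫ dCone C D f (i+1) i σ σ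
    = 𝟙 (obCone C D i σ))

include hsC in
lemma QfD_eq (i : ℤ) (σ ρ : X) :
    (∑ τ : Iv ρ σ, D.d i (i-1) σ τ.1 ≫ QfD C D f sC (i-1) i τ.1 ρ)
      + (∑ τ : Iv ρ σ, QfD C D f sC i (i+1) σ τ.1 ≫ D.d (i+1) i τ.1 ρ)
    = (if h : ρ = σ then eqToHom (show D.ob i σ = D.ob i ρ by rw [h]) else 0)
      - (∑ τ : Iv ρ σ, gfD C D f sC i σ τ.1 ≫ f.f i τ.1 ρ) := by
  have key := Gam_eq (E := MCone C D f) (s := sC) hsC i σ ρ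
  have keye := congrArg PHom.e key
  rw [PHom.add_e, PHom.sum_e, PHom.sum_e, del_cone_e] at keye
  have s1 : ∀ τ : Iv ρ σ,
      ((MCone C D f).d i (i-1) σ τ.1 ≫ Gam (MCone C D f) sC (i-1) i τ.1 ρ).e
        = D.d i (i-1) σ τ.1 ≫ QfD C D f sC (i-1) i τ.1 ρ := by
    intro τ
    rw [PHom.comp_e, MCone_d, dCone_c, dCone_e, zero_comp, zero_add, QfD]
  have s2 : ∀ τ : Iv ρ σ,
      (Gam (MCone C D f) sC i (i+1) σ τ.1 ≫ (MCone C D f).d (i+1) i τ.1 ρ).e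
        = gfD C D f sC i σ τ.1 ≫ f.f i τ.1 ρ
          + QfD C D f sC i (i+1) σ τ.1 ≫ D.d (i+1) i τ.1 ρ := by
    intro τ
    rw [PHom.comp_e, MCone_d, dCone_b, dCone_e,
      bGen_eq C D f (show (i:ℤ) = i+1-1 by omega) τ.1 ρ, QfD, gfD, ← Category.assoc]
  rw [Finset.sum_congr rfl (fun τ _ => s1 τ), Finset.sum_congr rfl (fun τ _ => s2 τ),
    Finset.sum_add_distrib] at keye
  rw [eq_sub_iff_add_eq, ← keye]
  abel

include hsC in
lemma gfD_comm (i : ℤ) (σ ρ : X) :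
    (∑ τ : Iv ρ σ, D.d i (i-1) σ τ.1 ≫ gfD C D f sC (i-1) τ.1 ρ)
      = ∑ τ : Iv ρ σ, gfD C D f sC i σ τ.1 ≫ C.d i (i-1) τ.1 ρ := by
  have key := Gam_eq (E := MCone C D f) (s := sC) hsC i σ ρ
  have keyc := congrArg PHom.c key
  rw [PHom.add_c, PHom.sum_c, PHom.sum_c, del_cone_c] at keyc
  have s1 : ∀ τ : Iv ρ σ,
      ((MCone C D f).d i (i-1) σ τ.1 ≫ Gam (MCone C D f) sC (i-1) i τ.1 ρ).c
        = D.d i (i-1) σ τ.1 ≫ gfD C D f sC (i-1) τ.1 ρ := by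
    intro τ
    rw [PHom.comp_c, MCone_d, dCone_c, dCone_e, zero_comp, zero_add, gfD]
    congr 1
    rw [Gam_cast (MCone C D f) sC (rfl : i - 1 = i - 1) (show i-1+1 = i from by omega) τ.1 ρ]
    simp [eqToHom_trans]
  have s2 : ∀ τ : Iv ρ σ,
      (Gam (MCone C D f) sC i (i+1) σ τ.1 ≫ (MCone C D f).d (i+1) i τ.1 ρ).c
        = -(gfD C D f sC i σ τ.1 ≫ C.d i (i-1) τ.1 ρ) := by
    intro τ
    rw [PHom.comp_c, MCone_d, dCone_c, dCone_a, comp_zero, add_zero, gfD, Category.assoc]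
    rw [Preadditive.comp_neg]
    congr 2
    exact (cast_eqToHom' (fun m => C.d m (i-1) τ.1 ρ) (show (i:ℤ) = i+1-1 by omega) _).symm
  rw [Finset.sum_congr rfl (fun τ _ => s1 τ), Finset.sum_congr rfl (fun τ _ => s2 τ)] at keyc
  rw [Finset.sum_neg_distrib, ← sub_eq_add_neg] at keyc
  exact sub_eq_zero.mp keyc

lemma d_cast (E : GCx X A) {k i l j : ℤ} (hk : k = i) (hl : l = j) (σ τ : X) :
    E.d k l σ τ = eqToHom (by rw [hk]) ≫ E.d i j σ τ ≫ eqToHom (by rw [hl]) := by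
  subst hk; subst hl; simp

lemma f_cast {k i : ℤ} (h : k = i) (σ τ : X) :
    f.f k σ τ = eqToHom (by rw [h]) ≫ f.f i σ τ ≫ eqToHom (by rw [h]) := by
  subst h; simp

include hsC in
lemma PfD_eq (i : ℤ) (σ ρ : X) :
    (∑ τ : Iv ρ σ, C.d i (i-1) σ τ.1 ≫ PfD C D f sC (i-1) i τ.1 ρ)
      + (∑ τ : Iv ρ σ, PfD C D f sC i (i+1) σ τ.1 ≫ C.d (i+1) i τ.1 ρ)
    = (if h : ρ = σ then eqToHom (show C.ob i σ = C.ob i ρ by rw [h]) else 0)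
      - (∑ τ : Iv ρ σ, f.f i σ τ.1 ≫ gfD C D f sC i τ.1 ρ) := by
  have pf1 : C.ob i σ = C.ob (i+1-1) σ := by rw [show i+1-1 = i from by omega]
  have pf2 : C.ob (i+1-1) ρ = C.ob i ρ := by rw [show i+1-1 = i from by omega]
  have key := Gam_eq (E := MCone C D f) (s := sC) hsC (i+1) σ ρ
  have keya := congrArg (fun w => eqToHom pf1 ≫ PHom.a w ≫ eqToHom pf2) key
  simp only [PHom.add_a, PHom.sum_a, Preadditive.comp_add, Preadditive.add_comp,
    Preadditive.comp_sum, Preadditive.sum_comp] at keya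
  -- summand analysis
  have s1 : ∀ τ : Iv ρ σ,
      eqToHom pf1 ≫ ((MCone C D f).d (i+1) (i+1-1) σ τ.1
          ≫ Gam (MCone C D f) sC (i+1-1) (i+1) τ.1 ρ).a ≫ eqToHom pf2
        = C.d i (i-1) σ τ.1 ≫ PfD C D f sC (i-1) i τ.1 ρ
          + f.f i σ τ.1 ≫ gfD C D f sC i τ.1 ρ := by
    intro τ
    rw [MCone_d, PHom.comp_a, dCone_a, dCone_b, bGen_diag]
    rw [Gam_cast (MCone C D f) sC (show i+1-1 = i from by omega) rfl τ.1 ρ]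
    rw [d_cast C (show i+1-1 = i from by omega) (show i+1-1-1 = i-1 from by omega) σ τ.1]
    rw [f_cast C D f (show i+1-1 = i from by omega) σ τ.1]
    rw [PfD, gfD]
    rw [Gam_cast (MCone C D f) sC (show i-1+1 = i from by omega) rfl τ.1 ρ]
    simp [eqToHom_trans, Category.assoc, Preadditive.comp_add, Preadditive.add_comp,
      Preadditive.neg_comp, Preadditive.comp_neg]
  have s2 : ∀ τ : Iv ρ σ,
      eqToHom pf1 ≫ (Gam (MCone C D f) sC (i+1) (i+1+1) σ τ.1
          ≫ (MCone C D f).d (i+1+1) (i+1) τ.1 ρ).a ≫ eqToHom pf2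
        = PfD C D f sC i (i+1) σ τ.1 ≫ C.d (i+1) i τ.1 ρ := by
    intro τ
    rw [MCone_d, PHom.comp_a, dCone_a, dCone_c]
    rw [d_cast C (show i+1+1-1 = i+1 from by omega) (show i+1-1 = i from by omega) τ.1 ρ]
    rw [PfD]
    simp [eqToHom_trans, Category.assoc, Preadditive.comp_add, Preadditive.add_comp,
      Preadditive.neg_comp, Preadditive.comp_neg]
  have s4 : eqToHom pf1 ≫ (del (MCone C D f) (i+1) σ ρ).a ≫ eqToHom pf2
      = (if h : ρ = σ then eqToHom (show C.ob i σ = C.ob i ρ by rw [h]) else 0) := by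
    rw [del_cone_a]
    by_cases h : ρ = σ
    · subst h; simp [eqToHom_trans]
    · simp [h]
  rw [Finset.sum_congr rfl (fun τ _ => s1 τ), Finset.sum_congr rfl (fun τ _ => s2 τ), s4,
    Finset.sum_add_distrib] at keya
  rw [eq_sub_iff_add_eq, ← keya]
  abel

end Extract

/-- a chain map `f : C → D` of finite chain complexes in `A*(X)` is a chain
equivalence in `A*(X)` if and only if each diagonal component `f_{σ,σ} : C(σ) → D(σ)` is
a chain equivalence in `A`. -/
theorem stmt5 (C D : GCx X A) (f : HomGC C D) :
    IsEquivGC C D f ↔ ∀ σ : X, IsLocalEquiv C D f σ := by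
  constructor
  · rintro ⟨g, ⟨P, -, hPeq⟩, ⟨Q, -, hQeq⟩⟩ σ
    refine ⟨fun i => g.f i σ σ, fun i => fcomm_diag D C g i σ,
      ⟨fun i j => P i j σ σ, fun i => ?_⟩, ⟨fun i j => Q i j σ σ, fun i => ?_⟩⟩
    · have h := hPeq i σ σ
      rw [sum_self σ (fun τ => C.d i (i-1) σ τ.1 ≫ P (i-1) i τ.1 σ),
          sum_self σ (fun τ => P i (i+1) σ τ.1 ≫ C.d (i+1) i τ.1 σ),
          sum_self σ (fun τ => f.f i σ τ.1 ≫ g.f i τ.1 σ), dif_pos rfl] at h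
      simpa using h
    · have h := hQeq i σ σ
      rw [sum_self σ (fun τ => D.d i (i-1) σ τ.1 ≫ Q (i-1) i τ.1 σ),
          sum_self σ (fun τ => Q i (i+1) σ τ.1 ≫ D.d (i+1) i τ.1 σ),
          sum_self σ (fun τ => g.f i σ τ.1 ≫ f.f i τ.1 σ), dif_pos rfl] at h
      simpa using h
  · intro hloc
    choose g h1 using hloc
    have hg := fun σ => (h1 σ).1
    choose P hP using fun σ => (h1 σ).2.1
    choose Q hQ using fun σ => (h1 σ).2.2
    have hsC := sCone_hs C D f g P Q hg hP hQ
    exact ⟨⟨gfD C D f (sCone C D f g P Q), gfD_shape C D f (sCone C D f g P Q),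
        gfD_comm C D f (sCone C D f g P Q) hsC⟩,
      ⟨PfD C D f (sCone C D f g P Q), PfD_shape C D f (sCone C D f g P Q),
        PfD_eq C D f (sCone C D f g P Q) hsC⟩,
      ⟨QfD C D f (sCone C D f g P Q), QfD_shape C D f (sCone C D f g P Q),
        QfD_eq C D f (sCone C D f g P Q) hsC⟩⟩
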